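/- For all positive integers r and n with r odd: if n is even then L_{3r} * (∑_{k=1}^n F_{2rk}^3) = F_{rn} * L_{rn+r} * (L_{rn} * F_{rn+r} * F_{2rn+r} - 2*F_r^2), and if n is odd then L_{3r} * (∑_{k=1}^n F_{2rk}^3) = L_{rn} * F_{rn+r} * (F_{rn} * L_{rn+r} * F_{2rn+r} - 2*F_r^2). -/

import Mathlib

open Finset

def L : ℕ → ℤ
  | 0 => 2
  | 1 => 1
  | n + 2 => L (n + 1) + L n

def F (n : ℕ) : ℤ := Nat.fib n

lemma Frec (m : ℕ) : F (m+2) = F (m+1) + F m := by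
  simp only [F, Nat.fib_add_two]; push_cast; ring

lemma Fadd1 (a b : ℕ) : F (a + b + 1) = F a * F b + F (a+1) * F (b+1) := by
  simp only [F, Nat.fib_add]; push_cast; ring

lemma Fadd (a b : ℕ) (ha : 1 ≤ a) (hb : 1 ≤ b) :
    F (a + b) = F a * (F (b+1) - F b) + F (a+1) * F b := by
  obtain ⟨b, rfl⟩ : ∃ b', b = b' + 1 := ⟨b-1, by omega⟩
  have h1 := Fadd1 a b
  have h2 := Frec b
  rw [show a + (b+1) = a + b + 1 from rfl, h1, show b + 1 + 1 = b + 2 from rfl]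
  linear_combination (-(F a)) * h2

lemma L_eq : ∀ m, L m = 2 * F (m+1) - F m
  | 0 => by norm_num [F, L]
  | 1 => by norm_num [F, L]
  | (m+2) => by
    have h1 := L_eq (m+1)
    have h2 := L_eq m
    have h3 := Frec (m+1)
    have h4 := Frec m
    rw [show L (m+2) = L (m+1) + L m from rfl, h1, h2,
        show m+2+1 = m+1+2 from rfl, h3]
    linear_combination h4

lemma cassini (m : ℕ) : F (m+1)^2 - F (m+1) * F m - F m ^ 2 = (-1:ℤ)^m := by
  induction m with
  | zero => norm_num [F]
  | succ k ih =>
    have h := Frec k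
    rw [show k+1+1 = k+2 from rfl, pow_succ]
    linear_combination (F (k+2) + F k) * h - ih

theorem stmt12 (r n : ℕ) (hr : 0 < r) (hn : 0 < n) (hro : Odd r) :
    (Even n → L (3 * r) * ∑ k ∈ Finset.Icc 1 n, F (2 * r * k) ^ 3 =
      F (r * n) * L (r * n + r) * (L (r * n) * F (r * n + r) * F (2 * r * n + r) - 2 * F r ^ 2)) ∧
    (Odd n → L (3 * r) * ∑ k ∈ Finset.Icc 1 n, F (2 * r * k) ^ 3 =
      L (r * n) * F (r * n + r) * (F (r * n) * L (r * n + r) * F (2 * r * n + r) - 2 * F r ^ 2)) := by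
  have hr1 : 1 ≤ r := hr
  have hc : F (r+1)^2 - F (r+1) * F r - F r ^ 2 = -1 := by
    rw [cassini r, Odd.neg_one_pow hro]
  have e1 : F (r+r) = F r * (F (r+1) - F r) + F (r+1) * F r := Fadd r r hr1 hr1
  have e2 : F (r+r+1) = F r * F r + F (r+1) * F (r+1) := Fadd1 r r
  have e3 : F (r+r+r) = F (r+r) * (F (r+1) - F r) + F (r+r+1) * F r := Fadd (r+r) r (by omega) hr1
  have e4 : F (r+r+r+1) = F (r+r) * F r + F (r+r+1) * F (r+1) := Fadd1 (r+r) r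
  induction n, hn using Nat.le_induction with
  | base =>
    constructor
    · intro h; exact absurd h Nat.not_even_one
    · intro _
      rw [Finset.Icc_self, Finset.sum_singleton]
      simp only [show Nat.succ 0 = 1 from rfl, mul_one]
      rw [show 2*r+r = r+r+r by ring, show 2*r = r+r by ring, show 3*r = r+r+r by ring,
          L_eq (r+r+r), L_eq (r+r), L_eq r, e4, e3, e2, e1]
      linear_combination (8 * F r^3 * F (r+1)^2 + (-8) * F r^3 * F (r+1)^4 + (-8) * F r^4 * F (r+1) + 16 * F r^4 * F (r+1)^3 + 2 * F r^5 + (-2) * F r^5 * F (r+1)^2 + (-6) * F r^6 * F (r+1) + 2 * F r^7) * hc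
  | succ n hn ih =>
    have ha1 : 1 ≤ r * n := Nat.mul_pos hr (by omega)
    have d1 : F (r*n + r) = F (r*n) * (F (r+1) - F r) + F (r*n+1) * F r := Fadd (r*n) r ha1 hr1
    have d2 : F (r*n + r + 1) = F (r*n) * F r + F (r*n+1) * F (r+1) := Fadd1 (r*n) r
    have d3 : F (r*n + r + r) = F (r*n+r) * (F (r+1) - F r) + F (r*n+r+1) * F r :=
      Fadd (r*n+r) r (by omega) hr1
    have d4 : F (r*n + r + r + 1) = F (r*n+r) * F r + F (r*n+r+1) * F (r+1) := Fadd1 (r*n+r) r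
    have d5 : F (r*n + (r*n + r)) =
        F (r*n) * (F (r*n+r+1) - F (r*n+r)) + F (r*n+1) * F (r*n+r) :=
      Fadd (r*n) (r*n+r) ha1 (by omega)
    have d6 : F ((r*n+r) + (r*n+r)) =
        F (r*n+r) * (F (r*n+r+1) - F (r*n+r)) + F (r*n+r+1) * F (r*n+r) :=
      Fadd (r*n+r) (r*n+r) (by omega) (by omega)
    have d7 : F ((r*n+r) + (r*n+r+r)) =
        F (r*n+r) * (F (r*n+r+r+1) - F (r*n+r+r)) + F (r*n+r+1) * F (r*n+r+r) :=
      Fadd (r*n+r) (r*n+r+r) (by omega) (by omega)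
    have hcs := cassini (r*n)
    rw [pow_mul, Odd.neg_one_pow hro] at hcs
    constructor
    · intro he
      have hno : Odd n := Nat.not_even_iff_odd.mp (Nat.even_add_one.mp he)
      rw [Odd.neg_one_pow hno] at hcs
      have ihs := ih.2 hno
      rw [Finset.sum_Icc_succ_top (show 1 ≤ n+1 by omega), mul_add, ihs,
          show 2*r*(n+1)+r = r*n+r+(r*n+r+r) by ring,
          show 2*r*(n+1) = r*n+r+(r*n+r) by ring,
          show 2*r*n+r = r*n+(r*n+r) by ring,
          show r*(n+1) = r*n+r by ring,
          show 3*r = r+r+r by ring,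
          L_eq (r+r+r), L_eq (r*n), L_eq (r*n+r), L_eq (r*n+r+r),
          e4, e3, e2, e1, d7, d6, d5, d4, d3, d2, d1]
      linear_combination (4 * F (r*n+1)^2 * F r^3 + (-8) * F (r*n+1)^6 * F r^3 + 8 * F (r*n+1)^6 * F r^3 * F (r+1)^2 + (-8) * F (r*n+1)^6 * F r^3 * F (r+1)^4 + (-8) * F (r*n+1)^6 * F r^4 * F (r+1) + 16 * F (r*n+1)^6 * F r^4 * F (r+1)^3 + 2 * F (r*n+1)^6 * F r^5 + (-2) * F (r*n+1)^6 * F r^5 * F (r+1)^2 + (-6) * F (r*n+1)^6 * F r^6 * F (r+1) + 2 * F (r*n+1)^6 * F r^7 + 4 * F (r*n) * F (r*n+1) * F r^2 * F (r+1) + (-6) * F (r*n) * F (r*n+1) * F r^3 + (-4) * F (r*n) * F (r*n+1)^5 * F r^2 * F (r+1) + 4 * F (r*n) * F (r*n+1)^5 * F r^2 * F (r+1)^3 + (-4) * F (r*n) * F (r*n+1)^5 * F r^2 * F (r+1)^5 + 26 * F (r*n) * F (r*n+1)^5 * F r^3 + (-30) * F (r*n) * F (r*n+1)^5 * F r^3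 * F (r+1)^2 + 34 * F (r*n) * F (r*n+1)^5 * F r^3 * F (r+1)^4 + 42 * F (r*n) * F (r*n+1)^5 * F r^4 * F (r+1) + (-68) * F (r*n) * F (r*n+1)^5 * F r^4 * F (r+1)^3 + (-14) * F (r*n) * F (r*n+1)^5 * F r^5 + 26 * F (r*n) * F (r*n+1)^5 * F r^5 * F (r+1)^2 + 28 * F (r*n) * F (r*n+1)^5 * F r^6 * F (r+1) + (-14) * F (r*n) * F (r*n+1)^5 * F r^7 + (-2) * F (r*n)^2 * F r^2 * F (r+1) + 12 * F (r*n)^2 * F r^3 + 12 * F (r*n)^2 * F (r*n+1)^4 * F r * F (r+1)^2 + (-12) * F (r*n)^2 * F (r*n+1)^4 * F r * F (r+1)^4 + 12 * F (r*n)^2 * F (r*n+1)^4 * F r * F (r+1)^6 + (-2) * F (r*n)^2 * F (r*n+1)^4 * F r^2 * F (r+1) + 14 * F (r*n)^2 * F (r*n+1)^4 * F r^2 * F (r+1)^3 + (-26) * F (r*n)^2 * F (r*n+1)^4 * F r^2 * F (r+1)^5 + (-17) * F (r*n)^2 * F (r*n+1)^4 * F r^3 + 27 * F (r*n)^2 *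 F (r*n+1)^4 * F r^3 * F (r+1)^2 + (-25) * F (r*n)^2 * F (r*n+1)^4 * F r^3 * F (r+1)^4 + (-69) * F (r*n)^2 * F (r*n+1)^4 * F r^4 * F (r+1) + 110 * F (r*n)^2 * F (r*n+1)^4 * F r^4 * F (r+1)^3 + 33 * F (r*n)^2 * F (r*n+1)^4 * F r^5 + (-75) * F (r*n)^2 * F (r*n+1)^4 * F r^5 * F (r+1)^2 + (-36) * F (r*n)^2 * F (r*n+1)^4 * F r^6 * F (r+1) + 33 * F (r*n)^2 * F (r*n+1)^4 * F r^7 + 8 * F (r*n)^3 * F (r*n+1)^3 * F (r+1)^3 + (-8) * F (r*n)^3 * F (r*n+1)^3 * F (r+1)^5 + 8 * F (r*n)^3 * F (r*n+1)^3 * F (r+1)^7 + (-36) * F (r*n)^3 * F (r*n+1)^3 * F r * F (r+1)^2 + 44 * F (r*n)^3 * F (r*n+1)^3 * F r * F (r+1)^4 + (-52) * F (r*n)^3 * F (r*n+1)^3 * F r * F (r+1)^6 + 60 * F (r*n)^3 * F (r*n+1)^3 * F r^2 * F (r+1) + (-88) * F (r*n)^3 * F (r*n+1)^3 * F r^2 *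 F (r+1)^3 + 124 * F (r*n)^3 * F (r*n+1)^3 * F r^2 * F (r+1)^5 + (-32) * F (r*n)^3 * F (r*n+1)^3 * F r^3 + 56 * F (r*n)^3 * F (r*n+1)^3 * F r^3 * F (r+1)^2 + (-100) * F (r*n)^3 * F (r*n+1)^3 * F r^3 * F (r+1)^4 + 28 * F (r*n)^3 * F (r*n+1)^3 * F r^4 * F (r+1) + (-60) * F (r*n)^3 * F (r*n+1)^3 * F r^4 * F (r+1)^3 + (-32) * F (r*n)^3 * F (r*n+1)^3 * F r^5 + 116 * F (r*n)^3 * F (r*n+1)^3 * F r^5 * F (r+1)^2 + (-4) * F (r*n)^3 * F (r*n+1)^3 * F r^6 * F (r+1) + (-32) * F (r*n)^3 * F (r*n+1)^3 * F r^7 + (-12) * F (r*n)^4 * F (r*n+1)^2 * F (r+1)^3 + 12 * F (r*n)^4 * F (r*n+1)^2 * F (r+1)^5 + (-12) * F (r*n)^4 * F (r*n+1)^2 * F (r+1)^7 + 51 * F (r*n)^4 * F (r*n+1)^2 * F r * F (r+1)^2 + (-63) * F (r*n)^4 * F (r*n+1)^2 * F r * F (r+1)^4 + 75 * F (r*n)^4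 * F (r*n+1)^2 * F r * F (r+1)^6 + (-97) * F (r*n)^4 * F (r*n+1)^2 * F r^2 * F (r+1) + 136 * F (r*n)^4 * F (r*n+1)^2 * F r^2 * F (r+1)^3 + (-187) * F (r*n)^4 * F (r*n+1)^2 * F r^2 * F (r+1)^5 + 71 * F (r*n)^4 * F (r*n+1)^2 * F r^3 + (-117) * F (r*n)^4 * F (r*n+1)^2 * F r^3 * F (r+1)^2 + 190 * F (r*n)^4 * F (r*n+1)^2 * F r^3 * F (r+1)^4 + 24 * F (r*n)^4 * F (r*n+1)^2 * F r^4 * F (r+1) + (-5) * F (r*n)^4 * F (r*n+1)^2 * F r^4 * F (r+1)^3 + 21 * F (r*n)^4 * F (r*n+1)^2 * F r^5 + (-114) * F (r*n)^4 * F (r*n+1)^2 * F r^5 * F (r+1)^2 + 45 * F (r*n)^4 * F (r*n+1)^2 * F r^6 * F (r+1) + 21 * F (r*n)^4 * F (r*n+1)^2 * F r^7 + 6 * F (r*n)^5 * F (r*n+1) * F (r+1)^3 + (-6) * F (r*n)^5 * F (r*n+1) * F (r+1)^5 + 6 * F (r*n)^5 * F (r*n+1) * F (r+1)^7 + (-30)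 * F (r*n)^5 * F (r*n+1) * F r * F (r+1)^2 + 36 * F (r*n)^5 * F (r*n+1) * F r * F (r+1)^4 + (-42) * F (r*n)^5 * F (r*n+1) * F r * F (r+1)^6 + 48 * F (r*n)^5 * F (r*n+1) * F r^2 * F (r+1) + (-72) * F (r*n)^5 * F (r*n+1) * F r^2 * F (r+1)^3 + 102 * F (r*n)^5 * F (r*n+1) * F r^2 * F (r+1)^5 + (-42) * F (r*n)^5 * F (r*n+1) * F r^3 + 60 * F (r*n)^5 * F (r*n+1) * F r^3 * F (r+1)^2 + (-96) * F (r*n)^5 * F (r*n+1) * F r^3 * F (r+1)^4 + 6 * F (r*n)^5 * F (r*n+1) * F r^4 * F (r+1) + (-18) * F (r*n)^5 * F (r*n+1) * F r^4 * F (r+1)^3 + (-22) * F (r*n)^5 * F (r*n+1) * F r^5 + 88 * F (r*n)^5 * F (r*n+1) * F r^5 * F (r+1)^2 + (-16) * F (r*n)^5 * F (r*n+1) * F r^6 * F (r+1) + (-22) * F (r*n)^5 * F (r*n+1) * F r^7 + (-1) * F (r*n)^6 * F (r+1)^3 + F (r*n)^6 * F (r+1)^5 + (-1) * F (r*n)^6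 * F (r+1)^7 + 6 * F (r*n)^6 * F r * F (r+1)^2 + (-7) * F (r*n)^6 * F r * F (r+1)^4 + 8 * F (r*n)^6 * F r * F (r+1)^6 + (-7) * F (r*n)^6 * F r^2 * F (r+1) + 12 * F (r*n)^6 * F r^2 * F (r+1)^3 + (-18) * F (r*n)^6 * F r^2 * F (r+1)^5 + (-8) * F (r*n)^6 * F r^3 + 7 * F (r*n)^6 * F r^3 * F (r+1)^2 + (-2) * F (r*n)^6 * F r^3 * F (r+1)^4 + (-25) * F (r*n)^6 * F r^4 * F (r+1) + 44 * F (r*n)^6 * F r^4 * F (r+1)^3 + 12 * F (r*n)^6 * F r^5 + (-30) * F (r*n)^6 * F r^5 * F (r+1)^2 + (-13) * F (r*n)^6 * F r^6 * F (r+1) + 12 * F (r*n)^6 * F r^7) * hc + ((-8) * F (r*n+1)^2 * F r^3 + 10 * F (r*n+1)^2 * F r^5 + 8 * F (r*n+1)^4 * F r^3 + (-10) * F (r*n+1)^4 * F r^5 + (-8) * F (r*n) * F (r*n+1) * F r^2 * F (r+1) + 12 * F (r*n) * F (r*n+1) * F r^3 + 20 * F (r*n) * F (r*n+1) * F r^4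 * F (r+1) + (-20) * F (r*n) * F (r*n+1) * F r^5 + 8 * F (r*n) * F (r*n+1)^3 * F r^2 * F (r+1) + (-20) * F (r*n) * F (r*n+1)^3 * F r^3 + (-20) * F (r*n) * F (r*n+1)^3 * F r^4 * F (r+1) + 30 * F (r*n) * F (r*n+1)^3 * F r^5 + 4 * F (r*n)^2 * F r^2 * F (r+1) + (-14) * F (r*n)^2 * F r^3 + (-10) * F (r*n)^2 * F r^4 * F (r+1) + 20 * F (r*n)^2 * F r^5 + (-12) * F (r*n)^2 * F (r*n+1)^2 * F r^2 * F (r+1) + 18 * F (r*n)^2 * F (r*n+1)^2 * F r^3 + 30 * F (r*n)^2 * F (r*n+1)^2 * F r^4 * F (r+1) + (-30) * F (r*n)^2 * F (r*n+1)^2 * F r^5 + (-4) * F (r*n)^3 * F (r*n+1) * F r^2 * F (r+1) + (-2) * F (r*n)^3 * F (r*n+1) * F r^3 + 10 * F (r*n)^3 * F (r*n+1) * F r^4 * F (r+1) + 4 * F (r*n)^4 * F r^2 * F (r+1) + (-14) * F (r*n)^4 * F r^3 + (-10) * F (r*n)^4 * F r^4 * F (r+1) + 20 * F (r*n)^4 *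 F r^5) * hcs
    · intro ho
      have hne : Even n := Nat.not_odd_iff_even.mp (Nat.odd_add_one.mp ho)
      rw [Even.neg_one_pow hne] at hcs
      have ihs := ih.1 hne
      rw [Finset.sum_Icc_succ_top (show 1 ≤ n+1 by omega), mul_add, ihs,
          show 2*r*(n+1)+r = r*n+r+(r*n+r+r) by ring,
          show 2*r*(n+1) = r*n+r+(r*n+r) by ring,
          show 2*r*n+r = r*n+(r*n+r) by ring,
          show r*(n+1) = r*n+r by ring,
          show 3*r = r+r+r by ring,
          L_eq (r+r+r), L_eq (r*n), L_eq (r*n+r), L_eq (r*n+r+r),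
          e4, e3, e2, e1, d7, d6, d5, d4, d3, d2, d1]
      linear_combination (8 * F (r*n+1)^2 * F r^3 + (-8) * F (r*n+1)^6 * F r^3 + 8 * F (r*n+1)^6 * F r^3 * F (r+1)^2 + (-8) * F (r*n+1)^6 * F r^3 * F (r+1)^4 + (-8) * F (r*n+1)^6 * F r^4 * F (r+1) + 16 * F (r*n+1)^6 * F r^4 * F (r+1)^3 + 2 * F (r*n+1)^6 * F r^5 + (-2) * F (r*n+1)^6 * F r^5 * F (r+1)^2 + (-6) * F (r*n+1)^6 * F r^6 * F (r+1) + 2 * F (r*n+1)^6 * F r^7 + 4 * F (r*n) * F (r*n+1) * F r^2 * F (r+1) + (-10) * F (r*n) * F (r*n+1) * F r^3 + (-4) * F (r*n) * F (r*n+1)^5 * F r^2 * F (r+1) + 4 * F (r*n) * F (r*n+1)^5 * F r^2 * F (r+1)^3 + (-4) * F (r*n) * F (r*n+1)^5 * F r^2 * F (r+1)^5 + 26 * F (r*n) * F (r*n+1)^5 * F r^3 + (-30) * F (r*n) * F (r*n+1)^5 * F r^3 * F (r+1)^2 + 34 * F (r*n) * F (r*n+1)^5 * F r^3 * F (r+1)^4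 + 42 * F (r*n) * F (r*n+1)^5 * F r^4 * F (r+1) + (-68) * F (r*n) * F (r*n+1)^5 * F r^4 * F (r+1)^3 + (-14) * F (r*n) * F (r*n+1)^5 * F r^5 + 26 * F (r*n) * F (r*n+1)^5 * F r^5 * F (r+1)^2 + 28 * F (r*n) * F (r*n+1)^5 * F r^6 * F (r+1) + (-14) * F (r*n) * F (r*n+1)^5 * F r^7 + (-2) * F (r*n)^2 * F r^2 * F (r+1) + 8 * F (r*n)^2 * F r^3 + 12 * F (r*n)^2 * F (r*n+1)^4 * F r * F (r+1)^2 + (-12) * F (r*n)^2 * F (r*n+1)^4 * F r * F (r+1)^4 + 12 * F (r*n)^2 * F (r*n+1)^4 * F r * F (r+1)^6 + (-2) * F (r*n)^2 * F (r*n+1)^4 * F r^2 * F (r+1) + 14 * F (r*n)^2 * F (r*n+1)^4 * F r^2 * F (r+1)^3 + (-26) * F (r*n)^2 * F (r*n+1)^4 * F r^2 * F (r+1)^5 + (-17) * F (r*n)^2 * F (r*n+1)^4 * F r^3 + 27 * F (r*n)^2 * F (r*n+1)^4 * F r^3 * F (r+1)^2 + (-25) * F (r*n)^2 * F (r*n+1)^4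 * F r^3 * F (r+1)^4 + (-69) * F (r*n)^2 * F (r*n+1)^4 * F r^4 * F (r+1) + 110 * F (r*n)^2 * F (r*n+1)^4 * F r^4 * F (r+1)^3 + 33 * F (r*n)^2 * F (r*n+1)^4 * F r^5 + (-75) * F (r*n)^2 * F (r*n+1)^4 * F r^5 * F (r+1)^2 + (-36) * F (r*n)^2 * F (r*n+1)^4 * F r^6 * F (r+1) + 33 * F (r*n)^2 * F (r*n+1)^4 * F r^7 + 8 * F (r*n)^3 * F (r*n+1)^3 * F (r+1)^3 + (-8) * F (r*n)^3 * F (r*n+1)^3 * F (r+1)^5 + 8 * F (r*n)^3 * F (r*n+1)^3 * F (r+1)^7 + (-36) * F (r*n)^3 * F (r*n+1)^3 * F r * F (r+1)^2 + 44 * F (r*n)^3 * F (r*n+1)^3 * F r * F (r+1)^4 + (-52) * F (r*n)^3 * F (r*n+1)^3 * F r * F (r+1)^6 + 60 * F (r*n)^3 * F (r*n+1)^3 * F r^2 * F (r+1) + (-88) * F (r*n)^3 * F (r*n+1)^3 * F r^2 * F (r+1)^3 + 124 * F (r*n)^3 * F (r*n+1)^3 * F r^2 * F (r+1)^5 + (-32)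 * F (r*n)^3 * F (r*n+1)^3 * F r^3 + 56 * F (r*n)^3 * F (r*n+1)^3 * F r^3 * F (r+1)^2 + (-100) * F (r*n)^3 * F (r*n+1)^3 * F r^3 * F (r+1)^4 + 28 * F (r*n)^3 * F (r*n+1)^3 * F r^4 * F (r+1) + (-60) * F (r*n)^3 * F (r*n+1)^3 * F r^4 * F (r+1)^3 + (-32) * F (r*n)^3 * F (r*n+1)^3 * F r^5 + 116 * F (r*n)^3 * F (r*n+1)^3 * F r^5 * F (r+1)^2 + (-4) * F (r*n)^3 * F (r*n+1)^3 * F r^6 * F (r+1) + (-32) * F (r*n)^3 * F (r*n+1)^3 * F r^7 + (-12) * F (r*n)^4 * F (r*n+1)^2 * F (r+1)^3 + 12 * F (r*n)^4 * F (r*n+1)^2 * F (r+1)^5 + (-12) * F (r*n)^4 * F (r*n+1)^2 * F (r+1)^7 + 51 * F (r*n)^4 * F (r*n+1)^2 * F r * F (r+1)^2 + (-63) * F (r*n)^4 * F (r*n+1)^2 * F r * F (r+1)^4 + 75 * F (r*n)^4 * F (r*n+1)^2 * F r * F (r+1)^6 + (-97) * F (r*n)^4 * F (r*n+1)^2 *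 F r^2 * F (r+1) + 136 * F (r*n)^4 * F (r*n+1)^2 * F r^2 * F (r+1)^3 + (-187) * F (r*n)^4 * F (r*n+1)^2 * F r^2 * F (r+1)^5 + 71 * F (r*n)^4 * F (r*n+1)^2 * F r^3 + (-117) * F (r*n)^4 * F (r*n+1)^2 * F r^3 * F (r+1)^2 + 190 * F (r*n)^4 * F (r*n+1)^2 * F r^3 * F (r+1)^4 + 24 * F (r*n)^4 * F (r*n+1)^2 * F r^4 * F (r+1) + (-5) * F (r*n)^4 * F (r*n+1)^2 * F r^4 * F (r+1)^3 + 21 * F (r*n)^4 * F (r*n+1)^2 * F r^5 + (-114) * F (r*n)^4 * F (r*n+1)^2 * F r^5 * F (r+1)^2 + 45 * F (r*n)^4 * F (r*n+1)^2 * F r^6 * F (r+1) + 21 * F (r*n)^4 * F (r*n+1)^2 * F r^7 + 6 * F (r*n)^5 * F (r*n+1) * F (r+1)^3 + (-6) * F (r*n)^5 * F (r*n+1) * F (r+1)^5 + 6 * F (r*n)^5 * F (r*n+1) * F (r+1)^7 + (-30) * F (r*n)^5 * F (r*n+1) * F r * F (r+1)^2 + 36 * F (r*n)^5 * F (r*n+1)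 * F r * F (r+1)^4 + (-42) * F (r*n)^5 * F (r*n+1) * F r * F (r+1)^6 + 48 * F (r*n)^5 * F (r*n+1) * F r^2 * F (r+1) + (-72) * F (r*n)^5 * F (r*n+1) * F r^2 * F (r+1)^3 + 102 * F (r*n)^5 * F (r*n+1) * F r^2 * F (r+1)^5 + (-42) * F (r*n)^5 * F (r*n+1) * F r^3 + 60 * F (r*n)^5 * F (r*n+1) * F r^3 * F (r+1)^2 + (-96) * F (r*n)^5 * F (r*n+1) * F r^3 * F (r+1)^4 + 6 * F (r*n)^5 * F (r*n+1) * F r^4 * F (r+1) + (-18) * F (r*n)^5 * F (r*n+1) * F r^4 * F (r+1)^3 + (-22) * F (r*n)^5 * F (r*n+1) * F r^5 + 88 * F (r*n)^5 * F (r*n+1) * F r^5 * F (r+1)^2 + (-16) * F (r*n)^5 * F (r*n+1) * F r^6 * F (r+1) + (-22) * F (r*n)^5 * F (r*n+1) * F r^7 + (-1) * F (r*n)^6 * F (r+1)^3 + F (r*n)^6 * F (r+1)^5 + (-1) * F (r*n)^6 * F (r+1)^7 + 6 * F (r*n)^6 * F r * F (r+1)^2 + (-7) * F (r*n)^6 *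 F r * F (r+1)^4 + 8 * F (r*n)^6 * F r * F (r+1)^6 + (-7) * F (r*n)^6 * F r^2 * F (r+1) + 12 * F (r*n)^6 * F r^2 * F (r+1)^3 + (-18) * F (r*n)^6 * F r^2 * F (r+1)^5 + (-8) * F (r*n)^6 * F r^3 + 7 * F (r*n)^6 * F r^3 * F (r+1)^2 + (-2) * F (r*n)^6 * F r^3 * F (r+1)^4 + (-25) * F (r*n)^6 * F r^4 * F (r+1) + 44 * F (r*n)^6 * F r^4 * F (r+1)^3 + 12 * F (r*n)^6 * F r^5 + (-30) * F (r*n)^6 * F r^5 * F (r+1)^2 + (-13) * F (r*n)^6 * F r^6 * F (r+1) + 12 * F (r*n)^6 * F r^7) * hc + (8 * F (r*n+1)^2 * F r^3 + (-10) * F (r*n+1)^2 * F r^5 + 8 * F (r*n+1)^4 * F r^3 + (-10) * F (r*n+1)^4 * F r^5 + 8 * F (r*n) * F (r*n+1) * F r^2 * F (r+1) + (-12) * F (r*n) * F (r*n+1) * F r^3 + (-20) * F (r*n) * F (r*n+1) * F r^4 * F (r+1) + 20 * F (r*n) * F (r*n+1) * F r^5 + 8 * F (r*n) * F (r*n+1)^3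 * F r^2 * F (r+1) + (-20) * F (r*n) * F (r*n+1)^3 * F r^3 + (-20) * F (r*n) * F (r*n+1)^3 * F r^4 * F (r+1) + 30 * F (r*n) * F (r*n+1)^3 * F r^5 + (-4) * F (r*n)^2 * F r^2 * F (r+1) + 14 * F (r*n)^2 * F r^3 + 10 * F (r*n)^2 * F r^4 * F (r+1) + (-20) * F (r*n)^2 * F r^5 + (-12) * F (r*n)^2 * F (r*n+1)^2 * F r^2 * F (r+1) + 18 * F (r*n)^2 * F (r*n+1)^2 * F r^3 + 30 * F (r*n)^2 * F (r*n+1)^2 * F r^4 * F (r+1) + (-30) * F (r*n)^2 * F (r*n+1)^2 * F r^5 + (-4) * F (r*n)^3 * F (r*n+1) * F r^2 * F (r+1) + (-2) * F (r*n)^3 * F (r*n+1) * F r^3 + 10 * F (r*n)^3 * F (r*n+1) * F r^4 * F (r+1) + 4 * F (r*n)^4 * F r^2 * F (r+1) + (-14) * F (r*n)^4 * F r^3 + (-10) * F (r*n)^4 * F r^4 * F (r+1) + 20 * F (r*n)^4 * F r^5) * hcs
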